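/- Let p ≥ 5 be a prime such that 2^p − 1 is prime. Then the only way to write 2^p − 1 as a difference h − k of harmonic numbers h and k is h = 2^p and k = 1. -/

import Mathlib

/-- A harmonic number is a positive integer of the form 2^a * 3^b. -/
def IsHarmonic (n : ℕ) : Prop := ∃ a b : ℕ, n = 2 ^ a * 3 ^ b

private lemma pow2_mod3 (a : ℕ) : 2 ^ a % 3 = 2 ^ (a % 2) % 3 := by
  conv_lhs => rw [← Nat.div_add_mod a 2]
  rw [pow_add, pow_mul, Nat.mul_mod, Nat.pow_mod]
  norm_num [Nat.mod_mod_of_dvd]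

private lemma pow3_mod8 (a : ℕ) : 3 ^ a % 8 = 3 ^ (a % 2) % 8 := by
  conv_lhs => rw [← Nat.div_add_mod a 2]
  rw [pow_add, pow_mul, Nat.mul_mod, Nat.pow_mod]
  norm_num [Nat.mod_mod_of_dvd]

private lemma pow2_mod9 (a : ℕ) : 2 ^ a % 9 = 2 ^ (a % 6) % 9 := by
  conv_lhs => rw [← Nat.div_add_mod a 6]
  rw [pow_add, pow_mul, Nat.mul_mod, Nat.pow_mod]
  norm_num [Nat.mod_mod_of_dvd]

/-- For a Mersenne prime 2^p - 1 with p ≥ 5 prime, the only way to write it as a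
difference of harmonic numbers is 2^p - 1. -/
theorem mersenne_as_difference (p : ℕ) (hp : p.Prime) (hp5 : 5 ≤ p)
    (hmp : Nat.Prime (2 ^ p - 1)) (h k : ℕ) (hh : IsHarmonic h) (hk : IsHarmonic k)
    (hdiff : (2 ^ p - 1) + k = h) :
    h = 2 ^ p ∧ k = 1 := by
  obtain ⟨a, b, rfl⟩ := hh
  obtain ⟨c, d, rfl⟩ := hk
  have hP : 32 ≤ 2 ^ p := by
    calc (32:ℕ) = 2 ^ 5 := by norm_num
    _ ≤ 2 ^ p := Nat.pow_le_pow_right (by norm_num) hp5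
  have heq : 2 ^ p + 2 ^ c * 3 ^ d = 2 ^ a * 3 ^ b + 1 := by omega
  have hpodd : p % 2 = 1 := Nat.odd_iff.mp (hp.odd_of_ne_two (by omega))
  have hp3 : 2 ^ p % 3 = 2 := by rw [pow2_mod3, hpodd]; norm_num
  have hp8 : (8:ℕ) ∣ 2 ^ p := by
    calc (8:ℕ) = 2 ^ 3 := by norm_num
    _ ∣ 2 ^ p := pow_dvd_pow 2 (by omega)
  rcases Nat.eq_zero_or_pos d with hd | hd
  · subst hd
    simp only [pow_zero, mul_one] at heq ⊢
    rcases Nat.eq_zero_or_pos c with hc | hc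
    · subst hc
      simp only [pow_zero] at heq ⊢
      exact ⟨by omega, by trivial⟩
    · -- c ≥ 1 : h must be an odd power of 3, leading to contradictions
      exfalso
      have ha : a = 0 := by
        by_contra ha
        have h2a : (2:ℕ) ∣ 2 ^ a * 3 ^ b := Dvd.dvd.mul_right (dvd_pow_self 2 ha) _
        have h2c : (2:ℕ) ∣ 2 ^ c := dvd_pow_self 2 hc.ne'
        omega
      subst ha
      simp only [pow_zero, one_mul] at heq
      -- heq : 2^p + 2^c = 3^b + 1
      have hc2 : 2 ≤ 2 ^ c := by
        calc (2:ℕ) = 2 ^ 1 := by norm_num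
        _ ≤ 2 ^ c := Nat.pow_le_pow_right (by norm_num) hc
      have hb : 2 ≤ b := by
        by_contra hb
        interval_cases b <;> norm_num at heq <;> omega
      have h3b : (3:ℕ) ∣ 3 ^ b := dvd_pow_self 3 (by omega)
      have hb9 : (9:ℕ) ∣ 3 ^ b := by
        calc (9:ℕ) = 3 ^ 2 := by norm_num
        _ ∣ 3 ^ b := pow_dvd_pow 3 hb
      have hcodd : c % 2 = 1 := by
        have hmc := pow2_mod3 c
        rcases Nat.mod_two_eq_zero_or_one c with hcc | hcc <;>
          rw [hcc] at hmc <;> norm_num at hmc <;> omega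
      rcases Nat.lt_or_ge c 3 with hc3 | hc3
      · -- c = 1 : 3^b = 2^p + 1, impossible mod 9
        have hc1 : c = 1 := by omega
        subst hc1
        norm_num at heq
        have h9 : 2 ^ (p % 6) % 9 = 8 := by
          have := pow2_mod9 p
          omega
        have hr3 : (3:ℕ) ∣ p := by
          rcases (show p % 6 = 0 ∨ p % 6 = 1 ∨ p % 6 = 2 ∨ p % 6 = 3 ∨ p % 6 = 4 ∨ p % 6 = 5
            by omega) with hr|hr|hr|hr|hr|hr <;> rw [hr] at h9 <;> norm_num at h9 <;> omega
        rcases hp.eq_one_or_self_of_dvd 3 hr3 with h3 | h3 <;> omega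
      · -- c ≥ 3 : 3^b ≡ 7 mod 8, impossible
        have h8c : (8:ℕ) ∣ 2 ^ c := by
          calc (8:ℕ) = 2 ^ 3 := by norm_num
          _ ∣ 2 ^ c := pow_dvd_pow 2 hc3
        have hmb := pow3_mod8 b
        rcases Nat.mod_two_eq_zero_or_one b with hbb | hbb <;>
          rw [hbb] at hmb <;> norm_num at hmb <;> omega
  · -- d ≥ 1 : then b = 0, c = 0, and 2^a - 3^d = 2^p - 1 factors
    exfalso
    have h3d : (3:ℕ) ∣ 2 ^ c * 3 ^ d := Dvd.dvd.mul_left (dvd_pow_self 3 hd.ne') _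
    have hb0 : b = 0 := by
      by_contra hb
      have h3b : (3:ℕ) ∣ 2 ^ a * 3 ^ b := Dvd.dvd.mul_left (dvd_pow_self 3 hb) _
      omega
    subst hb0
    simp only [pow_zero, mul_one] at heq
    have hkpos : 0 < 2 ^ c * 3 ^ d := by positivity
    have hc0 : c = 0 := by
      by_contra hc
      have h2c : (2:ℕ) ∣ 2 ^ c * 3 ^ d := Dvd.dvd.mul_right (dvd_pow_self 2 hc) _
      rcases Nat.eq_zero_or_pos a with ha | ha
      · subst ha; norm_num at heq; omega
      · have h2a : (2:ℕ) ∣ 2 ^ a := dvd_pow_self 2 ha.ne'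
        omega
    subst hc0
    simp only [pow_zero, one_mul] at heq hkpos
    -- heq : 2^p + 3^d = 2^a + 1
    have h3dd : 3 ≤ 3 ^ d := by
      calc (3:ℕ) = 3 ^ 1 := by norm_num
      _ ≤ 3 ^ d := Nat.pow_le_pow_right (by norm_num) hd
    have ha6 : 6 ≤ a := by
      by_contra ha
      have : 2 ^ a ≤ 2 ^ 5 := Nat.pow_le_pow_right (by norm_num) (by omega)
      norm_num at this
      omega
    have h8a : (8:ℕ) ∣ 2 ^ a := by
      calc (8:ℕ) = 2 ^ 3 := by norm_num
      _ ∣ 2 ^ a := pow_dvd_pow 2 (by omega)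
    have haeven : a % 2 = 0 := by
      have hma := pow2_mod3 a
      rcases Nat.mod_two_eq_zero_or_one a with haa | haa <;>
        rw [haa] at hma <;> norm_num at hma <;> omega
    have hdeven : d % 2 = 0 := by
      have hmd := pow3_mod8 d
      rcases Nat.mod_two_eq_zero_or_one d with hdd | hdd <;>
        rw [hdd] at hmd <;> norm_num at hmd <;> omega
    obtain ⟨m, rfl⟩ : ∃ m, a = 2 * m := ⟨a / 2, by omega⟩
    obtain ⟨n, rfl⟩ : ∃ n, d = 2 * n := ⟨d / 2, by omega⟩
    simp only [two_mul, pow_add] at heq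
    -- heq : 2^p + 3^n * 3^n = 2^m * 2^m + 1
    have hxy : 3 ^ n < 2 ^ m := by
      by_contra hxy
      push_neg at hxy
      have := Nat.mul_le_mul hxy hxy
      omega
    have key : (2 ^ m + 3 ^ n) * (2 ^ m - 3 ^ n) = 2 ^ p - 1 := by
      have h1 : (1:ℕ) ≤ 2 ^ p := by omega
      zify [hxy.le, h1]
      have hz : (2:ℤ) ^ p + 3 ^ n * 3 ^ n = 2 ^ m * 2 ^ m + 1 := by exact_mod_cast heq
      linear_combination -hz
    have hdvd : (2 ^ m + 3 ^ n) ∣ (2 ^ p - 1) := ⟨2 ^ m - 3 ^ n, key.symm⟩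
    have hmpos : 0 < 2 ^ m := Nat.pow_pos (by norm_num)
    have hnpos : 0 < 3 ^ n := Nat.pow_pos (by norm_num)
    rcases hmp.eq_one_or_self_of_dvd _ hdvd with h1 | h1
    · omega
    · rw [h1] at key
      have hsub : 2 ^ m - 3 ^ n = 1 :=
        Nat.eq_of_mul_eq_mul_left (show 0 < 2 ^ p - 1 by omega) (by rw [mul_one]; exact key)
      have h8m : (8:ℕ) ∣ 2 ^ m := by
        calc (8:ℕ) = 2 ^ 3 := by norm_num
        _ ∣ 2 ^ m := pow_dvd_pow 2 (by omega)
      have hmn := pow3_mod8 n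
      rcases Nat.mod_two_eq_zero_or_one n with hnn | hnn <;>
        rw [hnn] at hmn <;> norm_num at hmn <;> omega
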